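/- The continuum hypothesis implies the existence of a Wetzel family. -/

import Mathlib

open Set Metric

lemma dense_pick {D : Set ℂ} (hD : Dense D) (a bad : ℂ) {ε : ℝ} (hε : 0 < ε) :
    ∃ d ∈ D, dist d a < ε ∧ d ≠ bad := by
  set a' : ℂ := if a = bad then a + (ε / 4 : ℝ) else a with ha'
  have ha'bad : a' ≠ bad := by
    by_cases h : a = bad
    · simp only [ha', if_pos h]
      intro hc
      rw [← h, add_eq_left] at hc
      simp only [Complex.ofReal_eq_zero] at hc
      linarith
    · simpa only [ha', if_neg h] using h
  have hdista : dist a' a ≤ ε / 2 := by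
    by_cases h : a = bad
    · simp only [ha', if_pos h, dist_eq_norm, add_sub_cancel_left, Complex.norm_real,
        Real.norm_eq_abs]
      rw [abs_of_nonneg (by linarith)]
      linarith
    · simp [ha', if_neg h]
      linarith
  have hδ : 0 < min (ε / 2) (dist a' bad) := lt_min (by linarith) (dist_pos.2 ha'bad)
  obtain ⟨d, hdD, hd⟩ := hD.exists_dist_lt a' hδ
  refine ⟨d, hdD, ?_, ?_⟩
  · calc dist d a ≤ dist d a' + dist a' a := dist_triangle _ _ _
      _ < min (ε / 2) (dist a' bad) + ε / 2 := by rw [dist_comm]; exact add_lt_add_of_lt_of_le hd hdista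
      _ ≤ ε / 2 + ε / 2 := by gcongr; exact min_le_left _ _
      _ = ε := by ring
  · intro h
    rw [h] at hd
    exact absurd hd (not_lt.2 (min_le_right _ _))

open Set Metric Finset

noncomputable def wpoly (w : ℕ → ℂ) (k : ℕ) (z : ℂ) : ℂ := ∏ j ∈ Finset.range k, (z - w j)

lemma wpoly_diff (w : ℕ → ℂ) (k : ℕ) : Differentiable ℂ (wpoly w k) :=
  Differentiable.fun_finset_prod fun j _ => (differentiable_id.sub (differentiable_const _))

lemma wpoly_zero {w : ℕ → ℂ} {k m : ℕ} (h : m < k) : wpoly w k (w m) = 0 :=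
  Finset.prod_eq_zero (Finset.mem_range.2 h) (sub_self _)

lemma wpoly_ne_zero {w : ℕ → ℂ} (hw : Function.Injective w) (m : ℕ) :
    wpoly w m (w m) ≠ 0 := by
  refine Finset.prod_ne_zero_iff.2 fun j hj => ?_
  rw [Finset.mem_range] at hj
  exact sub_ne_zero.2 fun h => (Nat.lt_irrefl m (hw h ▸ hj))

lemma exists_entire (D : Set ℂ) (hD : Dense D) (w : ℕ → ℂ) (hw : Function.Injective w)
    (g : ℕ → ℂ → ℂ) :
    ∃ f : ℂ → ℂ, Differentiable ℂ f ∧ (∀ n, f (w n) ∈ D) ∧ ∀ n, f (w n) ≠ g n (w n) := by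
  -- bounds on compact balls
  have hbd : ∀ k r : ℕ, ∃ C : ℝ, 0 ≤ C ∧ ∀ z ∈ closedBall (0 : ℂ) r, ‖wpoly w k z‖ ≤ C := by
    intro k r
    obtain ⟨C, hC⟩ := (isCompact_closedBall (0 : ℂ) r).exists_bound_of_continuousOn
      ((wpoly_diff w k).continuous.continuousOn)
    exact ⟨max C 0, le_max_right _ _, fun z hz => (hC z hz).trans (le_max_left _ _)⟩
  choose M hM0 hM using hbd
  -- the key choice step
  have key : ∀ (m : ℕ) (A : ℂ), ∃ c : ℂ,
      (A + c * wpoly w m (w m)) ∈ D ∧ (A + c * wpoly w m (w m)) ≠ g m (w m) ∧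
      ‖c‖ ≤ (1 / 2 : ℝ) ^ m / (1 + M m m) := by
    intro m A
    have hB : wpoly w m (w m) ≠ 0 := wpoly_ne_zero hw m
    have hMpos : 0 < 1 + M m m := by have := hM0 m m; linarith
    have hεpos : 0 < (1 / 2 : ℝ) ^ m / (1 + M m m) * ‖wpoly w m (w m)‖ := by
      apply mul_pos (div_pos (by positivity) hMpos) (norm_pos_iff.2 hB)
    obtain ⟨d, hdD, hdist, hdne⟩ := dense_pick hD A (g m (w m)) hεpos
    refine ⟨(d - A) / wpoly w m (w m), ?_, ?_, ?_⟩
    · rwa [div_mul_cancel₀ _ hB, add_sub_cancel]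
    · rwa [div_mul_cancel₀ _ hB, add_sub_cancel]
    · rw [norm_div]
      rw [div_le_iff₀ (norm_pos_iff.2 hB)]
      rw [dist_eq_norm] at hdist
      exact le_of_lt hdist
  choose cf hcf1 hcf2 hcf3 using key
  -- recursive construction of coefficients
  let F : ℕ → ℕ → ℂ := fun n => Nat.rec (fun _ => 0)
    (fun m Fm => Function.update Fm m (cf m (∑ j ∈ Finset.range m, Fm j * wpoly w j (w m)))) n
  let c : ℕ → ℂ := fun m => F (m + 1) m
  have hFsucc : ∀ n, F (n + 1) = Function.update (F n) n
      (cf n (∑ j ∈ Finset.range n, F n j * wpoly w j (w n))) := fun n => rfl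
  have hF : ∀ n k, k < n → F n k = c k := by
    intro n
    induction n with
    | zero => intro k hk; exact absurd hk (Nat.not_lt_zero k)
    | succ n ih =>
      intro k hk
      rcases Nat.lt_succ_iff_lt_or_eq.1 hk with h | h
      · rw [hFsucc, Function.update_of_ne (Nat.ne_of_lt h), ih k h]
      · subst h; rfl
  have hA : ∀ m, ∑ j ∈ Finset.range m, F m j * wpoly w j (w m)
      = ∑ j ∈ Finset.range m, c j * wpoly w j (w m) := by
    intro m
    refine Finset.sum_congr rfl fun j hj => ?_
    rw [hF m j (Finset.mem_range.1 hj)]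
  set A : ℕ → ℂ := fun m => ∑ j ∈ Finset.range m, c j * wpoly w j (w m) with hAdef
  have hcm : ∀ m, c m = cf m (A m) := by
    intro m
    show Function.update (F m) m _ m = _
    rw [Function.update_self, hA]
  have hval1 : ∀ m, A m + c m * wpoly w m (w m) ∈ D := fun m => by
    rw [hcm m]; exact hcf1 m (A m)
  have hval2 : ∀ m, A m + c m * wpoly w m (w m) ≠ g m (w m) := fun m => by
    rw [hcm m]; exact hcf2 m (A m)
  have hnorm : ∀ m, ‖c m‖ ≤ (1 / 2 : ℝ) ^ m / (1 + M m m) := fun m => by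
    rw [hcm m]; exact hcf3 m (A m)
  -- the entire function
  set f : ℂ → ℂ := fun z => ∑' k, c k * wpoly w k z with hfdef
  have hfval : ∀ m, f (w m) = A m + c m * wpoly w m (w m) := by
    intro m
    have : f (w m) = ∑ k ∈ Finset.range (m + 1), c k * wpoly w k (w m) := by
      refine tsum_eq_sum fun k hk => ?_
      rw [Finset.mem_range, Nat.lt_succ_iff, not_le] at hk
      rw [wpoly_zero hk, mul_zero]
    rw [this, Finset.sum_range_succ]
  -- term bound on norms
  have hterm : ∀ (k : ℕ) (z : ℂ), z ∈ closedBall (0:ℂ) k →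
      ‖c k * wpoly w k z‖ ≤ (1 / 2 : ℝ) ^ k := by
    intro k z hz
    have hMpos : 0 < 1 + M k k := by have := hM0 k k; linarith
    calc ‖c k * wpoly w k z‖ = ‖c k‖ * ‖wpoly w k z‖ := norm_mul _ _
      _ ≤ ((1 / 2 : ℝ) ^ k / (1 + M k k)) * M k k := by
          apply mul_le_mul (hnorm k) (hM k k z hz) (norm_nonneg _)
          positivity
      _ ≤ ((1 / 2 : ℝ) ^ k / (1 + M k k)) * (1 + M k k) := by
          apply mul_le_mul_of_nonneg_left (by linarith) (by positivity)
      _ = (1 / 2 : ℝ) ^ k := div_mul_cancel₀ _ (ne_of_gt hMpos)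
  -- differentiability
  have hdiff : Differentiable ℂ f := by
    intro z
    set R : ℕ := ⌊‖z‖⌋₊ + 1 with hR
    have hzR : ‖z‖ < (R : ℝ) := by rw [hR]; push_cast; exact Nat.lt_floor_add_one _
    set u : ℕ → ℝ := fun k => if k < R then ‖c k‖ * M k R else (1 / 2 : ℝ) ^ k with hu
    have husum : Summable u := by
      rw [← summable_nat_add_iff R]
      have : (fun n => u (n + R)) = fun n => (1 / 2 : ℝ) ^ (n + R) := by
        funext n
        rw [hu]
        simp only [Nat.not_lt.2 (Nat.le_add_left R n), if_false]
      rw [this]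
      simp_rw [pow_add]
      exact summable_geometric_two.mul_right _
    have hDon : DifferentiableOn ℂ f (ball (0 : ℂ) R) := by
      refine Complex.differentiableOn_tsum_of_summable_norm husum
        (fun k => ((wpoly_diff w k).const_mul (c k)).differentiableOn) isOpen_ball ?_
      intro k y hy
      by_cases hk : k < R
      · rw [hu]; simp only [if_pos hk]
        rw [norm_mul]
        exact mul_le_mul_of_nonneg_left (hM k R y (ball_subset_closedBall hy)) (norm_nonneg _)
      · rw [hu]; simp only [if_neg hk]
        push_neg at hk
        refine hterm k y ?_
        rw [mem_closedBall, dist_zero_right]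
        rw [mem_ball, dist_zero_right] at hy
        calc ‖y‖ ≤ R := le_of_lt hy
          _ ≤ k := Nat.cast_le.2 hk
    exact hDon.differentiableAt (isOpen_ball.mem_nhds (by simpa [mem_ball, dist_zero_right] using hzR))
  exact ⟨f, hdiff, fun n => (hfval n) ▸ hval1 n, fun n => (hfval n) ▸ hval2 n⟩


def IsWetzel (F : Set (ℂ → ℂ)) : Prop :=
  (∀ f ∈ F, Differentiable ℂ f) ∧
    ∀ z : ℂ, Cardinal.mk ((fun f : ℂ → ℂ => f z) '' F) < Cardinal.mk F

lemma exists_good (D : Set ℂ) (hD : Dense D) (P : Set ℂ) (hP : P.Countable)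
    (G : Set (ℂ → ℂ)) (hG : G.Countable) :
    ∃ f : ℂ → ℂ, Differentiable ℂ f ∧ (∀ z ∈ P, f z ∈ D) ∧ f ∉ G := by
  -- an injective enumeration of a countable infinite superset of P
  set S : Set ℂ := P ∪ Set.range (fun n : ℕ => (n : ℂ)) with hS
  have hScount : S.Countable := hP.union (Set.countable_range _)
  have hSinf : S.Infinite :=
    Set.Infinite.mono Set.subset_union_right
      (Set.infinite_range_of_injective (fun a b h => by exact_mod_cast h))
  haveI : Countable S := hScount.to_subtype
  haveI : Infinite S := hSinf.to_subtype
  obtain ⟨eS⟩ := nonempty_denumerable S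
  haveI := eS
  set E : ↥S ≃ ℕ := Denumerable.eqv ↥S with hE
  set w : ℕ → ℂ := fun n => (E.symm n : ℂ) with hw
  have hwinj : Function.Injective w := fun a b h =>
    E.symm.injective (Subtype.ext h)
  have hwrange : ∀ z ∈ S, ∃ n, w n = z := by
    intro z hz
    exact ⟨E ⟨z, hz⟩, by simp [hw]⟩
  -- an enumeration covering G
  obtain ⟨g, hg⟩ := (hG.insert (fun _ => (0 : ℂ))).exists_eq_range (Set.insert_nonempty _ _)
  obtain ⟨f, hfd, hfD, hfne⟩ := exists_entire D hD w hwinj g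
  refine ⟨f, hfd, ?_, ?_⟩
  · intro z hz
    obtain ⟨n, rfl⟩ := hwrange z (Set.mem_union_left _ hz)
    exact hfD n
  · intro hfG
    have : f ∈ Set.range g := by rw [← hg]; exact Set.mem_insert_of_mem _ hfG
    obtain ⟨n, rfl⟩ := this
    exact hfne n rfl

theorem wetzel_of_CH (hCH : Cardinal.continuum = Cardinal.aleph 1) :
    ∃ F : Set (ℂ → ℂ), IsWetzel F := by
  have hCH0 : (Cardinal.continuum : Cardinal.{0}) = Cardinal.aleph 1 := by
    refine Cardinal.lift_inj.mp ?_
    rw [Cardinal.lift_continuum, Cardinal.lift_aleph, Ordinal.lift_one]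
    exact hCH
  obtain ⟨D, hDc, hDd⟩ := TopologicalSpace.exists_countable_dense ℂ
  set O := (Cardinal.aleph 1).ord.ToType with hO
  have hmkO : Cardinal.mk O = Cardinal.aleph 1 := by
    rw [hO, Cardinal.mk_toType, Cardinal.card_ord]
  have hmk : Cardinal.mk O = Cardinal.mk ℂ := by
    rw [hmkO, Cardinal.mk_complex, hCH0]
  obtain ⟨e⟩ : Nonempty (O ≃ ℂ) := Cardinal.eq.mp hmk
  have hcount : ∀ x : O, (Set.Iio x).Countable := fun x =>
    (Cardinal.countable_iff_lt_aleph_one _).mpr (Cardinal.mk_Iio_ord_toType x)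
  -- transfinite recursion
  have wf : WellFounded ((· < ·) : O → O → Prop) := IsWellFounded.wf
  set step : ∀ x : O, (∀ y, y < x → (ℂ → ℂ)) → (ℂ → ℂ) := fun x prev =>
    Classical.choose (exists_good D hDd (e '' Set.Iio x) ((hcount x).image e)
      (Set.range fun y : Set.Iio x => prev y.1 y.2)
      (haveI := (hcount x).to_subtype; Set.countable_range _)) with hstep
  set f : O → ℂ → ℂ := wf.fix step with hf
  have hfix : ∀ x, f x = step x fun y _ => f y := fun x => wf.fix_eq step x
  have hspec : ∀ x : O, Differentiable ℂ (f x) ∧ (∀ z ∈ e '' Set.Iio x, f x z ∈ D) ∧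
      f x ∉ (Set.range fun y : Set.Iio x => f y.1) := by
    intro x
    rw [hfix x]
    exact Classical.choose_spec (exists_good D hDd (e '' Set.Iio x) ((hcount x).image e)
      (Set.range fun y : Set.Iio x => f y.1)
      (haveI := (hcount x).to_subtype; Set.countable_range _))
  have hinj : Function.Injective f := by
    intro a b hab
    by_contra hne
    rcases lt_or_gt_of_ne hne with h | h
    · exact (hspec b).2.2 ⟨⟨a, h⟩, hab⟩
    · exact (hspec a).2.2 ⟨⟨b, h⟩, hab.symm⟩
  refine ⟨Set.range f, fun h hh => ?_, fun z => ?_⟩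
  · obtain ⟨x, rfl⟩ := hh
    exact (hspec x).1
  · have himg : (fun h : ℂ → ℂ => h z) '' Set.range f ⊆
        D ∪ ((fun y : O => f y z) '' Set.Iic (e.symm z)) := by
      rintro v ⟨h, ⟨x, rfl⟩, rfl⟩
      rcases le_or_gt x (e.symm z) with hle | hlt
      · exact Or.inr ⟨x, hle, rfl⟩
      · refine Or.inl ((hspec x).2.1 z ⟨e.symm z, hlt, by simp⟩)
    have hcnt : ((fun h : ℂ → ℂ => h z) '' Set.range f).Countable := by
      refine Set.Countable.mono himg (hDc.union (Set.Countable.image ?_ _))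
      rw [← Set.Iio_union_right]
      exact (hcount _).union (Set.countable_singleton _)
    calc Cardinal.mk ((fun h : ℂ → ℂ => h z) '' Set.range f)
        < Cardinal.aleph 1 := (Cardinal.countable_iff_lt_aleph_one _).mp hcnt
      _ = Cardinal.mk O := hmkO.symm
      _ = Cardinal.mk (Set.range f) := (Cardinal.mk_range_eq f hinj).symm
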